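/- Let H be a reduced, commutative, cancellative, atomic monoid. Then c_adj(H) = sup{μ_adj(a) : a ∈ H, A_a(∼_{H,mon}) ≠ ∅}. -/
import Mathlib


namespace CMR

variable {α : Type*} [CancelCommMonoid α]

/-- The factorization monoid `Z(H)`: the free abelian monoid over the set of atoms of `H`,
modeled as multisets of atoms. -/
abbrev Fac (α : Type*) [CancelCommMonoid α] : Type _ := Multiset {u : α // Irreducible u}

/-- The factorization homomorphism `π : Z(H) → H`. -/
def piF (z : Fac α) : α := (z.map Subtype.val).prod

/-- `Z a`: the set of factorizations of `a`. -/
def Z (a : α) : Set (Fac α) := {z | piF z = a}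

/-- `L a`: the set of lengths of `a`. -/
def L (a : α) : Set ℕ := {n | ∃ z ∈ Z a, Multiset.card z = n}

/-- `Zk a k`: the factorizations of `a` of length `k`. -/
def Zk (a : α) (k : ℕ) : Set (Fac α) := {z ∈ Z a | Multiset.card z = k}

/-- `ZM a M`: the factorizations of `a` whose length lies in `M`. -/
def ZM (a : α) (M : Set ℕ) : Set (Fac α) := {z ∈ Z a | Multiset.card z ∈ M}

/-- The distance between two factorizations:
`d(z,z') = max (|z / gcd(z,z')|, |z' / gcd(z,z')|)`. -/
noncomputable def d (z z' : Fac α) : ℕ :=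
  letI := Classical.decEq {u : α // Irreducible u}
  max (Multiset.card (z - z')) (Multiset.card (z' - z))

/-- The distance between two sets of factorizations, the minimum of pairwise
distances (with the convention `sInf ∅ = 0`). -/
noncomputable def dS (X Y : Set (Fac α)) : ℕ :=
  sInf {n : ℕ | ∃ x ∈ X, ∃ y ∈ Y, d x y = n}

/-- `k` and `l` are adjacent lengths of `a` (with `k < l`):
`L(a) ∩ [k, l] = {k, l}`. -/
def Adjacent (a : α) (k l : ℕ) : Prop :=
  k ∈ L a ∧ l ∈ L a ∧ k < l ∧ ∀ m ∈ L a, k ≤ m → m ≤ l → m = k ∨ m = l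

/-- A chain of factorizations of `a` from `z` to `z'` whose consecutive members
satisfy the step predicate `P`. -/
def Chain (a : α) (P : Fac α → Fac α → Prop) (z z' : Fac α) : Prop :=
  ∃ (n : ℕ) (c : Fin (n + 1) → Fac α),
    c 0 = z ∧ c (Fin.last n) = z' ∧ (∀ i, c i ∈ Z a) ∧
    ∀ i : Fin n, P (c i.castSucc) (c i.succ)

/-- The catenary degree of an element: the smallest `N ∈ ℕ∞` such that any two
factorizations of `a` are connected by an `N`-chain. -/
noncomputable def cat (a : α) : ℕ∞ :=
  sInf {N : ℕ∞ | ∀ z ∈ Z a, ∀ z' ∈ Z a,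
    Chain a (fun x y => (d x y : ℕ∞) ≤ N) z z'}

/-- The equal catenary degree of an element: the smallest `N ∈ ℕ∞` such that any two
factorizations of `a` of the same length are connected by an equal-length `N`-chain. -/
noncomputable def ceq (a : α) : ℕ∞ :=
  sInf {N : ℕ∞ | ∀ z ∈ Z a, ∀ z' ∈ Z a, Multiset.card z = Multiset.card z' →
    Chain a (fun x y => (d x y : ℕ∞) ≤ N ∧ Multiset.card x = Multiset.card y) z z'}

/-- The monotone catenary degree of an element: the smallest `N ∈ ℕ∞` such that any two
factorizations of `a` (ordered by length) are connected by a monotone `N`-chain. -/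
noncomputable def cmon (a : α) : ℕ∞ :=
  sInf {N : ℕ∞ | ∀ z ∈ Z a, ∀ z' ∈ Z a, Multiset.card z ≤ Multiset.card z' →
    Chain a (fun x y => (d x y : ℕ∞) ≤ N ∧ Multiset.card x ≤ Multiset.card y) z z'}

/-- The adjacent catenary degree of an element:
`c_adj(a) = sup{d(Z_k(a), Z_l(a)) : k, l ∈ L(a) adjacent}`. -/
noncomputable def cadj (a : α) : ℕ∞ :=
  sSup {r : ℕ∞ | ∃ k l : ℕ, Adjacent a k l ∧ r = (dS (Zk a k) (Zk a l) : ℕ∞)}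

noncomputable def catH (α : Type*) [CancelCommMonoid α] : ℕ∞ := ⨆ a : α, cat a
noncomputable def ceqH (α : Type*) [CancelCommMonoid α] : ℕ∞ := ⨆ a : α, ceq a
noncomputable def cmonH (α : Type*) [CancelCommMonoid α] : ℕ∞ := ⨆ a : α, cmon a
noncomputable def cadjH (α : Type*) [CancelCommMonoid α] : ℕ∞ := ⨆ a : α, cadj a

/-- `gcd(x, y) ≠ 1`: the two factorizations share an atom. -/
def RStep (x y : Fac α) : Prop := ∃ u, u ∈ x ∧ u ∈ y

/-- `z ≈ z'`: there is an `R`-chain concatenating `z` and `z'` in `Z a`. -/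
def RRel (a : α) (z z' : Fac α) : Prop := Chain a RStep z z'

/-- `z ≈_eq z'`: there is an equal-length `R`-chain concatenating `z` and `z'` in `Z a`. -/
def RRelEq (a : α) (z z' : Fac α) : Prop :=
  Chain a (fun x y => RStep x y ∧ Multiset.card x = Multiset.card y) z z'

/-- There is a monotone `R`-chain from `z` to `z'` in `Z a`. -/
def MonRChain (a : α) (z z' : Fac α) : Prop :=
  Chain a (fun x y => RStep x y ∧ Multiset.card x ≤ Multiset.card y) z z'

/-- `μ(a)`: the supremum, over the `R`-classes `ρ` of `Z a`, of the minimal length of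
an element of `ρ`. -/
noncomputable def mu (a : α) : ℕ∞ :=
  sSup {r : ℕ∞ | ∃ z ∈ Z a,
    r = ((sInf {n : ℕ | ∃ z', RRel a z z' ∧ Multiset.card z' = n} : ℕ) : ℕ∞)}

noncomputable def muH (α : Type*) [CancelCommMonoid α] : ℕ∞ := ⨆ a : α, mu a

/-- `μ_eq(a) = sup{k ∈ L(a) : Z_k(a) has more than one ≈_eq-class}`. -/
noncomputable def mueq (a : α) : ℕ∞ :=
  sSup {r : ℕ∞ | ∃ k ∈ L a,
    (∃ z ∈ Zk a k, ∃ z' ∈ Zk a k, ¬ RRelEq a z z') ∧ r = (k : ℕ∞)}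

noncomputable def mueqH (α : Type*) [CancelCommMonoid α] : ℕ∞ := ⨆ a : α, mueq a

/-- `μ_adj(a) = sup{k ∈ L(a) : d(Z_k(a), Z_l(a)) = k for the l ∈ L(a), l < k adjacent to k}`. -/
noncomputable def muadj (a : α) : ℕ∞ :=
  sSup {r : ℕ∞ | ∃ k ∈ L a,
    (∃ l : ℕ, Adjacent a l k ∧ dS (Zk a k) (Zk a l) = k) ∧ r = (k : ℕ∞)}

noncomputable def muadjH (α : Type*) [CancelCommMonoid α] : ℕ∞ := ⨆ a : α, muadj a

/-- The monoid of relations of `H`, as a subset of `Z(H) × Z(H)`. -/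
def relMon (α : Type*) [CancelCommMonoid α] : Set (Fac α × Fac α) :=
  {p | piF p.1 = piF p.2}

/-- The monoid of equal-length relations of `H`. -/
def relMonEq (α : Type*) [CancelCommMonoid α] : Set (Fac α × Fac α) :=
  {p | piF p.1 = piF p.2 ∧ Multiset.card p.1 = Multiset.card p.2}

/-- The monoid of monotone relations of `H`. -/
def relMonMon (α : Type*) [CancelCommMonoid α] : Set (Fac α × Fac α) :=
  {p | piF p.1 = piF p.2 ∧ Multiset.card p.1 ≤ Multiset.card p.2}

/-- `p` is an atom (irreducible element) of the reduced submonoid `S` of `Z(H) × Z(H)`. -/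
def IsAtomIn (S : Set (Fac α × Fac α)) (p : Fac α × Fac α) : Prop :=
  p ∈ S ∧ p ≠ 0 ∧ ∀ q ∈ S, ∀ r ∈ S, p = q + r → q = 0 ∨ r = 0

/-- `A_a(S) = A(S) ∩ (Z(a) × Z(a))`. -/
def AtomsAt (S : Set (Fac α × Fac α)) (a : α) : Set (Fac α × Fac α) :=
  {p | IsAtomIn S p ∧ p.1 ∈ Z a ∧ p.2 ∈ Z a}

/-- The tame degree `t(a, x)`. -/
noncomputable def tdeg (a : α) (x : Fac α) : ℕ∞ :=
  sInf {N : ℕ∞ | ∀ z ∈ Z a, (∃ w ∈ Z a, x ≤ w) →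
    ∃ z' ∈ Z a, x ≤ z' ∧ (d z z' : ℕ∞) ≤ N}

/-- The tame degree `t(H) = sup{t(a, u) : a ∈ H, u ∈ A(H)}`. -/
noncomputable def tH (α : Type*) [CancelCommMonoid α] : ℕ∞ :=
  ⨆ (a : α) (u : {u : α // Irreducible u}), tdeg a {u}

/-- The `m`-adjacent catenary degree of an element:
`c_{ad,m}(a) = sup{d(Z_k(a), Z_{[k-m,k)}(a)) : k ∈ L(a)}`. -/
noncomputable def cadm (m : ℕ) (a : α) : ℕ∞ :=
  sSup {r : ℕ∞ | ∃ k ∈ L a, r = (dS (Zk a k) (ZM a (Set.Ico (k - m) k)) : ℕ∞)}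

noncomputable def cadmH (α : Type*) [CancelCommMonoid α] (m : ℕ) : ℕ∞ := ⨆ a : α, cadm m a

/-- `μ_{ad,m}(a) = sup{k ∈ L(a) : d(Z_k(a), Z_{[k-m,k)}(a)) = k}`. -/
noncomputable def muadm (m : ℕ) (a : α) : ℕ∞ :=
  sSup {r : ℕ∞ | ∃ k ∈ L a, dS (Zk a k) (ZM a (Set.Ico (k - m) k)) = k ∧ r = (k : ℕ∞)}

noncomputable def muadmH (α : Type*) [CancelCommMonoid α] (m : ℕ) : ℕ∞ := ⨆ a : α, muadm m a

/-- `H` is reduced: the only unit is `1`. -/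
def Reduced (α : Type*) [CancelCommMonoid α] : Prop := ∀ a : α, IsUnit a → a = 1

/-- `H` is atomic: every element is a product of atoms. -/
def Atomic (α : Type*) [CancelCommMonoid α] : Prop := ∀ a : α, ∃ z : Fac α, piF z = a

/-- The ascending chain condition on principal ideals. -/
def ACCP (α : Type*) [CancelCommMonoid α] : Prop :=
  ∀ f : ℕ → α, (∀ n, f (n + 1) ∣ f n) → ∃ N, ∀ n, N ≤ n → f N ∣ f n

section Auxiliary

variable {α : Type*} [CancelCommMonoid α]

lemma piF_add (x y : Fac α) : piF (x + y) = piF x * piF y := by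
  simp [piF]

lemma d_comm (z z' : Fac α) : d z z' = d z' z := by
  simp [d, max_comm]

lemma dS_comm (X Y : Set (Fac α)) : dS X Y = dS Y X := by
  unfold dS
  congr 1
  ext n
  constructor
  · rintro ⟨x, hx, y, hy, rfl⟩; exact ⟨y, hy, x, hx, d_comm y x⟩
  · rintro ⟨y, hy, x, hx, rfl⟩; exact ⟨x, hx, y, hy, d_comm x y⟩

lemma d_add_left (c u v : Fac α) : d (c + u) (c + v) = d u v := by
  letI := Classical.decEq {u : α // Irreducible u}
  simp only [d, add_tsub_add_eq_tsub_left]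

lemma d_add_right (u v c : Fac α) : d (u + c) (v + c) = d u v := by
  rw [add_comm u c, add_comm v c, d_add_left]

lemma d_le_max (u v : Fac α) :
    d u v ≤ max (Multiset.card u) (Multiset.card v) := by
  letI := Classical.decEq {u : α // Irreducible u}
  simp only [d]
  exact max_le_max (Multiset.card_le_card tsub_le_self)
    (Multiset.card_le_card tsub_le_self)

lemma sub_sub_self {β : Type*} [DecidableEq β] (x y : Multiset β) :
    (x - y) - (y - x) = x - y := by
  ext u
  simp only [Multiset.count_sub]
  omega

/-- The core lemma: for an adjacent pair `k < l` in `L a`, there is `b` with an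
atom of the monotone relation monoid at `b` and `dS (Zk a k) (Zk a l) ≤ muadj b`. -/
lemma key (a : α) (k l : ℕ) (hadj : Adjacent a k l) :
    ∃ b : α, (AtomsAt (relMonMon α) b).Nonempty ∧
      (dS (Zk a k) (Zk a l) : ℕ∞) ≤ muadj b := by
  letI := Classical.decEq {u : α // Irreducible u}
  obtain ⟨hk, hl, hkl, hbet⟩ := hadj
  obtain ⟨x0, hx0, hx0k⟩ := hk
  obtain ⟨y0, hy0, hy0l⟩ := hl
  set D := dS (Zk a k) (Zk a l) with hDdef
  have hDle : ∀ z1 ∈ Zk a k, ∀ z2 ∈ Zk a l, D ≤ d z1 z2 := by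
    intro z1 h1 z2 h2
    exact Nat.sInf_le ⟨z1, h1, z2, h2, rfl⟩
  have hDmem : D ∈ {n : ℕ | ∃ x ∈ Zk a k, ∃ y ∈ Zk a l, d x y = n} :=
    Nat.sInf_mem ⟨d x0 y0, x0, ⟨hx0, hx0k⟩, y0, ⟨hy0, hy0l⟩, rfl⟩
  obtain ⟨x, hx, y, hy, hdxy⟩ := hDmem
  set g : Fac α := x ∩ y with hg
  set x' : Fac α := x - y with hx'
  set y' : Fac α := y - x with hy'
  have hxg : x' + g = x := Multiset.sub_add_inter x y
  have hyg : y' + g = y := by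
    rw [hy', hg, Multiset.inter_comm]; exact Multiset.sub_add_inter y x
  have hax : piF x' * piF g = a := by rw [← piF_add, hxg]; exact hx.1
  have hay : piF y' * piF g = a := by rw [← piF_add, hyg]; exact hy.1
  have hb : piF x' = piF y' := mul_right_cancel (hax.trans hay.symm)
  have hcx : Multiset.card x' + Multiset.card g = k := by
    rw [← hx.2, ← hxg, Multiset.card_add]
  have hcy : Multiset.card y' + Multiset.card g = l := by
    rw [← hy.2, ← hyg, Multiset.card_add]
  have hcxy : Multiset.card x' < Multiset.card y' := by omega
  have hDval : D = Multiset.card y' := by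
    rw [← hdxy]
    simp only [d, ← hx', ← hy']
    exact max_eq_right (le_of_lt hcxy)
  have hD1 : 1 ≤ D := by omega
  -- the target element
  refine ⟨piF y', ?_, ?_⟩
  · -- AtomsAt nonempty: (x', y') is an atom of relMonMon at piF y'
    refine ⟨(x', y'), ⟨⟨hb, le_of_lt hcxy⟩, ?_, ?_⟩, hb, rfl⟩
    · intro h
      have hy0 : y' = 0 := congrArg Prod.snd h
      have hcy0 : Multiset.card y' = 0 := by rw [hy0]; rfl
      omega
    · rintro ⟨p₁, q₁⟩ ⟨hpq1, hc1⟩ ⟨p₂, q₂⟩ ⟨hpq2, hc2⟩ heq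
      dsimp only at hpq1 hc1 hpq2 hc2
      simp only [Prod.mk_add_mk, Prod.mk.injEq] at heq
      obtain ⟨hxe, hye⟩ := heq
      by_contra hcon
      push_neg at hcon
      obtain ⟨h1ne, h2ne⟩ := hcon
      have hq1 : q₁ ≠ 0 := by
        rintro rfl
        have hp : p₁ = 0 := by simpa using hc1
        subst hp
        exact h1ne rfl
      have hq2 : q₂ ≠ 0 := by
        rintro rfl
        have hp : p₂ = 0 := by simpa using hc2
        subst hp
        exact h2ne rfl
      have hq1c : 0 < Multiset.card q₁ := Multiset.card_pos.2 hq1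
      have hq2c : 0 < Multiset.card q₂ := Multiset.card_pos.2 hq2
      -- the mixed factorization
      have hmidZ : piF (p₁ + q₂ + g) = a := by
        rw [piF_add, piF_add, ← hpq2, ← piF_add, ← hxe, hax]
      have hmidL : Multiset.card p₁ + Multiset.card q₂ + Multiset.card g ∈ L a := by
        refine ⟨p₁ + q₂ + g, hmidZ, by simp [Multiset.card_add]⟩
      have hcxe : Multiset.card p₁ + Multiset.card p₂ = Multiset.card x' := by
        rw [hxe, Multiset.card_add]
      have hcye : Multiset.card q₁ + Multiset.card q₂ = Multiset.card y' := by
        rw [hye, Multiset.card_add]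
      have hcase := hbet _ hmidL (by omega) (by omega)
      have hyZ : y ∈ Zk a l := hy
      rcases hcase with hcs | hcs
      · -- card q₂ = card p₂ : compare z2 = p₁ + q₂ + g with y = q₁ + q₂ + g
        have hq2p2 : Multiset.card q₂ = Multiset.card p₂ := by omega
        have hz2 : p₁ + q₂ + g ∈ Zk a k := ⟨hmidZ, by rw [Multiset.card_add, Multiset.card_add]; omega⟩
        have hDled := hDle _ hz2 _ hyZ
        have hdval : d (p₁ + q₂ + g) y = d p₁ q₁ := by
          rw [← hyg, hye, add_assoc p₁ q₂ g, add_assoc q₁ q₂ g, d_add_right]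
        have hdle : d p₁ q₁ ≤ Multiset.card q₁ := by
          refine le_trans (d_le_max p₁ q₁) ?_
          exact max_le (le_trans hc1 le_rfl) le_rfl
        omega
      · -- card p₁ = card q₁ : compare z1 = q₁ + p₂ + g with y = q₁ + q₂ + g
        have hp1q1 : Multiset.card p₁ = Multiset.card q₁ := by omega
        have hz1Z : piF (q₁ + p₂ + g) = a := by
          rw [piF_add, piF_add, ← hpq1, ← piF_add, ← hxe, hax]
        have hz1 : q₁ + p₂ + g ∈ Zk a k :=
          ⟨hz1Z, by rw [Multiset.card_add, Multiset.card_add]; omega⟩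
        have hDled := hDle _ hz1 _ hyZ
        have hdval : d (q₁ + p₂ + g) y = d p₂ q₂ := by
          rw [← hyg, hye, add_right_comm q₁ p₂ g, add_right_comm q₁ q₂ g,
            add_assoc, add_assoc, d_add_left, d_add_left]
        have hdle : d p₂ q₂ ≤ Multiset.card q₂ := by
          refine le_trans (d_le_max p₂ q₂) ?_
          exact max_le hc2 le_rfl
        omega
  · -- D ≤ muadj (piF y')
    have hx'Z : x' ∈ Z (piF y') := hb
    have hy'Z : y' ∈ Z (piF y') := rfl
    -- adjacency of card x' and card y' in L (piF y')
    have hadjb : Adjacent (piF y') (Multiset.card x') (Multiset.card y') := by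
      refine ⟨⟨x', hx'Z, rfl⟩, ⟨y', hy'Z, rfl⟩, hcxy, ?_⟩
      intro m hm h1 h2
      obtain ⟨w, hw, hwm⟩ := hm
      have hwa : piF (w + g) = a := by
        rw [piF_add, hw, hay]
      have hmL : m + Multiset.card g ∈ L a :=
        ⟨w + g, hwa, by rw [Multiset.card_add, hwm]⟩
      have := hbet _ hmL (by omega) (by omega)
      omega
    -- the distance equality
    have hsub1 : y' - x' = y' := by rw [hx', hy']; exact sub_sub_self y x
    have hsub2 : x' - y' = x' := by rw [hx', hy']; exact sub_sub_self x y
    have hdyx : d y' x' = Multiset.card y' := by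
      simp only [d, hsub1, hsub2]
      exact max_eq_left (le_of_lt hcxy)
    have hdSb : dS (Zk (piF y') (Multiset.card y')) (Zk (piF y') (Multiset.card x'))
        = Multiset.card y' := by
      refine le_antisymm (Nat.sInf_le ⟨y', ⟨hy'Z, rfl⟩, x', ⟨hx'Z, rfl⟩, hdyx⟩) ?_
      refine le_csInf ⟨Multiset.card y', y', ⟨hy'Z, rfl⟩, x', ⟨hx'Z, rfl⟩, hdyx⟩ ?_
      rintro n ⟨w, ⟨hwZ, hwc⟩, w', ⟨hw'Z, hw'c⟩, rfl⟩
      have hwk : w' + g ∈ Zk a k := by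
        refine ⟨?_, by rw [Multiset.card_add, hw'c]; omega⟩
        show piF (w' + g) = a
        rw [piF_add, hw'Z, hay]
      have hwl : w + g ∈ Zk a l := by
        refine ⟨?_, by rw [Multiset.card_add, hwc]; omega⟩
        show piF (w + g) = a
        rw [piF_add, hwZ, hay]
      have := hDle _ hwk _ hwl
      rw [d_add_right, d_comm] at this
      omega
    have hmem : (Multiset.card y' : ℕ∞) ≤ muadj (piF y') :=
      le_sSup ⟨Multiset.card y', ⟨y', hy'Z, rfl⟩, ⟨Multiset.card x', hadjb, hdSb⟩, rfl⟩
    rw [hDval]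
    exact hmem

end Auxiliary

/-- Let `H` be a reduced, commutative, cancellative, atomic monoid. Then
`c_adj(H) = sup{μ_adj(a) : a ∈ H, A_a(∼_{H,mon}) ≠ ∅}`. -/
theorem stmt7 {α : Type*} [CancelCommMonoid α]
    (hred : Reduced α) (hatomic : Atomic α) :
    cadjH α = sSup {r : ℕ∞ | ∃ a : α, (AtomsAt (relMonMon α) a).Nonempty ∧ r = muadj a} := by
  apply le_antisymm
  · refine iSup_le fun a => sSup_le ?_
    rintro r ⟨k, l, hadj, rfl⟩
    obtain ⟨b, hbne, hble⟩ := key a k l hadj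
    exact hble.trans (le_sSup ⟨b, hbne, rfl⟩)
  · refine sSup_le ?_
    rintro r ⟨b, -, rfl⟩
    refine le_trans (sSup_le ?_) (le_iSup (fun a => cadj a) b)
    rintro r' ⟨k, hkL, ⟨l, hadj, hdval⟩, rfl⟩
    refine le_sSup ⟨l, k, hadj, ?_⟩
    rw [dS_comm, hdval]

end CMR
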